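/- arXiv:2512.12118 — 4 statements merged into one kernel-verified Lean document; each statement's English description precedes it below -/
import Mathlib

section
/- For every A ≥ 0 there is a constant C = C(A) > 0 such that for all real T ≥ 2 and 1 ≤ M ≤ T, and all z = x + iy ∈ ℂ with |y| ≤ 1, one has |h_{T,M}(z)| ≤ C · ((1 + |x−T|/M)^{−A} + (1 + |x+T|/M)^{−A}). In particular h_{T,M} decays rapidly on the horizontal strip {|Im z| ≤ 1}. -/
/-- The test function `h_{T,M}(z) = ((z² + 1/4)/(T² + 1/4)) ·
(exp(−((z−T)/M)²) + exp(−((z+T)/M)²))`. -/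
noncomputable def hTM (T M : ℝ) (z : ℂ) : ℂ :=
  ((z ^ 2 + 1 / 4) / ((T : ℂ) ^ 2 + 1 / 4)) *
    (Complex.exp (-(((z - (T : ℂ)) / (M : ℂ)) ^ 2)) +
     Complex.exp (-(((z + (T : ℂ)) / (M : ℂ)) ^ 2)))

lemma aux1 (A t : ℝ) (hA : 0 ≤ A) (ht : 0 ≤ t) :
    (1+t)^2 * Real.exp (1 - t^2) ≤ Real.exp (1 + (2+A)^2/4) * (1+t) ^ (-A) := by
  have h1t : (0:ℝ) < 1 + t := by linarith
  have hpA : (0:ℝ) < (1+t) ^ A := Real.rpow_pos_of_pos h1t A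
  rw [Real.rpow_neg h1t.le, ← div_eq_mul_inv, le_div_iff₀ hpA]
  have h1 : (1+t)^2 * Real.exp (1 - t^2) * (1+t)^A
      = ((1+t)^2 * (1+t)^A) * Real.exp (1 - t^2) := by ring
  rw [h1]
  have h2 : (1+t)^2 * (1+t)^A ≤ Real.exp ((2+A)*t) := by
    have e1 : (1+t)^2 * (1+t)^A = (1+t) ^ ((2:ℝ)+A) := by
      rw [Real.rpow_add h1t, Real.rpow_two]
    rw [e1]
    calc (1+t) ^ ((2:ℝ)+A) ≤ (Real.exp t) ^ ((2:ℝ)+A) := by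
          apply Real.rpow_le_rpow h1t.le (by linarith [Real.add_one_le_exp t]) (by linarith)
      _ = Real.exp ((2+A)*t) := by
          rw [← Real.exp_one_rpow t, ← Real.rpow_mul (Real.exp_pos 1).le,
            Real.exp_one_rpow, mul_comm]
  calc ((1+t)^2 * (1+t)^A) * Real.exp (1 - t^2)
      ≤ Real.exp ((2+A)*t) * Real.exp (1 - t^2) :=
        mul_le_mul_of_nonneg_right h2 (Real.exp_nonneg _)
    _ = Real.exp ((2+A)*t + (1 - t^2)) := (Real.exp_add _ _).symm
    _ ≤ Real.exp (1 + (2+A)^2/4) := by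
        apply Real.exp_le_exp.mpr
        nlinarith [sq_nonneg (t - (2+A)/2)]

lemma auxexp (a b : ℝ) (hb : |b| ≤ 1) :
    ‖Complex.exp (-(((a:ℂ) + b*Complex.I)^2))‖ ≤ Real.exp (1 - a^2) := by
  rw [Complex.norm_exp]
  apply Real.exp_le_exp.mpr
  have : (-(((a:ℂ) + b*Complex.I)^2)).re = b^2 - a^2 := by
    simp [pow_two, Complex.mul_re]
  rw [this]
  nlinarith [abs_nonneg b, sq_abs b]

/-- For every `A ≥ 0` there is `C = C(A) > 0` such that for all `T ≥ 2`,
`1 ≤ M ≤ T`, and all `z = x + iy` with `|y| ≤ 1`: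
`|h_{T,M}(z)| ≤ C · ((1 + |x−T|/M)^{−A} + (1 + |x+T|/M)^{−A})`. -/
theorem stmt_1 :
    ∀ A : ℝ, 0 ≤ A → ∃ C : ℝ, 0 < C ∧
      ∀ T M x y : ℝ, 2 ≤ T → 1 ≤ M → M ≤ T → |y| ≤ 1 →
        ‖hTM T M (x + y * Complex.I)‖ ≤
          C * ((1 + |x - T| / M) ^ (-A) + (1 + |x + T| / M) ^ (-A)) := by
  intro A hA
  refine ⟨2 * Real.exp (1 + (2+A)^2/4), by positivity, ?_⟩
  intro T M x y hT hM hMT hy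
  have hM0 : (0:ℝ) < M := by linarith
  have hT0 : (0:ℝ) < T := by linarith
  set u := |x - T| / M with hu
  set v := |x + T| / M with hv
  have hu0 : 0 ≤ u := div_nonneg (abs_nonneg _) hM0.le
  have hv0 : 0 ≤ v := div_nonneg (abs_nonneg _) hM0.le
  have hMu : M * u = |x - T| := by rw [hu]; field_simp [hM0.ne']
  have hMv : M * v = |x + T| := by rw [hv]; field_simp [hM0.ne']
  -- exponential factors
  have hew1 : ((x:ℂ) + y*Complex.I - (T:ℂ)) / (M:ℂ)
      = ((((x-T)/M : ℝ)):ℂ) + (((y/M : ℝ)):ℂ)*Complex.I := by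
    have : (M:ℂ) ≠ 0 := by exact_mod_cast hM0.ne'
    field_simp
    push_cast
    field_simp
    ring
  have hew2 : ((x:ℂ) + y*Complex.I + (T:ℂ)) / (M:ℂ)
      = ((((x+T)/M : ℝ)):ℂ) + (((y/M : ℝ)):ℂ)*Complex.I := by
    have : (M:ℂ) ≠ 0 := by exact_mod_cast hM0.ne'
    field_simp
    push_cast
    field_simp
    ring
  have hyM : |y/M| ≤ 1 := by
    rw [abs_div, abs_of_pos hM0]
    rw [div_le_one hM0]; linarith
  have he1 : ‖Complex.exp (-((((x:ℂ) + y*Complex.I - (T:ℂ)) / (M:ℂ))^2))‖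
      ≤ Real.exp (1 - u^2) := by
    rw [hew1]
    have := auxexp ((x-T)/M) (y/M) hyM
    have e2 : ((x-T)/M)^2 = u^2 := by
      rw [hu, div_pow, div_pow, sq_abs]
    rwa [e2] at this
  have he2 : ‖Complex.exp (-((((x:ℂ) + y*Complex.I + (T:ℂ)) / (M:ℂ))^2))‖
      ≤ Real.exp (1 - v^2) := by
    rw [hew2]
    have := auxexp ((x+T)/M) (y/M) hyM
    have e2 : ((x+T)/M)^2 = v^2 := by
      rw [hv, div_pow, div_pow, sq_abs]
    rwa [e2] at this
  -- prefactor
  have hpre : ‖(((x:ℂ) + y*Complex.I)^2 + 1/4) / ((T:ℂ)^2 + 1/4)‖ ≤ (x^2 + 5/4) / T^2 := by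
    rw [norm_div]
    have hd : ((T:ℂ)^2 + 1/4) = (((T^2 + 1/4 : ℝ)):ℂ) := by push_cast; ring
    have hdn : ‖((T:ℂ)^2 + 1/4)‖ = T^2 + 1/4 := by
      rw [hd, Complex.norm_real, Real.norm_eq_abs]
      exact abs_of_pos (by positivity)
    rw [hdn]
    have hnum : ‖((x:ℂ) + y*Complex.I)^2 + 1/4‖ ≤ x^2 + 5/4 := by
      calc ‖((x:ℂ) + y*Complex.I)^2 + 1/4‖ ≤ ‖((x:ℂ) + y*Complex.I)^2‖ + ‖(1/4 : ℂ)‖ :=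
            norm_add_le _ _
        _ = ‖(x:ℂ) + y*Complex.I‖^2 + 1/4 := by rw [norm_pow]; norm_num
        _ = (x^2 + y^2) + 1/4 := by
            rw [Complex.sq_norm, Complex.normSq_add_mul_I]
        _ ≤ x^2 + 5/4 := by
            have : y^2 ≤ 1 := by nlinarith [sq_abs y, abs_nonneg y]
            linarith
    calc ‖((x:ℂ) + y*Complex.I)^2 + 1/4‖ / (T^2 + 1/4) ≤ (x^2 + 5/4) / (T^2 + 1/4) := by
          apply div_le_div_of_nonneg_right hnum (by positivity) |>.trans_eq rfl
      _ ≤ (x^2 + 5/4) / T^2 := by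
          apply div_le_div_of_nonneg_left (by positivity) (by positivity) (by linarith)
  have hpu : (x^2 + 5/4) / T^2 ≤ 2*(1+u)^2 := by
    rw [div_le_iff₀ (by positivity)]
    have hx : |x| ≤ T + M*u := by
      rw [hMu]
      calc |x| = |(x - T) + T| := by ring_nf
        _ ≤ |x - T| + |T| := abs_add_le _ _
        _ = T + |x - T| := by rw [abs_of_pos hT0]; ring
    have h2 : M*u ≤ T*u := mul_le_mul_of_nonneg_right hMT hu0
    nlinarith [sq_abs x, abs_nonneg x]
  have hpv : (x^2 + 5/4) / T^2 ≤ 2*(1+v)^2 := by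
    rw [div_le_iff₀ (by positivity)]
    have hx : |x| ≤ T + M*v := by
      rw [hMv]
      calc |x| = |(x + T) + (-T)| := by ring_nf
        _ ≤ |x + T| + |(-T)| := abs_add_le _ _
        _ = T + |x + T| := by rw [abs_neg, abs_of_pos hT0]; ring
    have h2 : M*v ≤ T*v := mul_le_mul_of_nonneg_right hMT hv0
    nlinarith [sq_abs x, abs_nonneg x]
  -- assembly
  unfold hTM
  set a := (((x:ℂ) + y*Complex.I)^2 + 1/4) / ((T:ℂ)^2 + 1/4) with ha
  set b := Complex.exp (-((((x:ℂ) + y*Complex.I - (T:ℂ)) / (M:ℂ))^2)) with hb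
  set c := Complex.exp (-((((x:ℂ) + y*Complex.I + (T:ℂ)) / (M:ℂ))^2)) with hc
  have key : ‖a * (b + c)‖ ≤ ‖a‖*‖b‖ + ‖a‖*‖c‖ := by
    rw [norm_mul]
    calc ‖a‖ * ‖b + c‖ ≤ ‖a‖ * (‖b‖ + ‖c‖) :=
          mul_le_mul_of_nonneg_left (norm_add_le _ _) (norm_nonneg _)
      _ = ‖a‖*‖b‖ + ‖a‖*‖c‖ := by ring
  refine key.trans ?_
  have t1 : ‖a‖*‖b‖ ≤ 2 * Real.exp (1 + (2+A)^2/4) * (1+u) ^ (-A) := by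
    calc ‖a‖*‖b‖ ≤ (2*(1+u)^2) * Real.exp (1 - u^2) := by
          apply mul_le_mul (hpre.trans hpu) he1 (norm_nonneg _) (by positivity)
      _ = 2 * ((1+u)^2 * Real.exp (1 - u^2)) := by ring
      _ ≤ 2 * (Real.exp (1 + (2+A)^2/4) * (1+u) ^ (-A)) := by
          have := aux1 A u hA hu0; linarith
      _ = 2 * Real.exp (1 + (2+A)^2/4) * (1+u) ^ (-A) := by ring
  have t2 : ‖a‖*‖c‖ ≤ 2 * Real.exp (1 + (2+A)^2/4) * (1+v) ^ (-A) := by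
    calc ‖a‖*‖c‖ ≤ (2*(1+v)^2) * Real.exp (1 - v^2) := by
          apply mul_le_mul (hpre.trans hpv) he2 (norm_nonneg _) (by positivity)
      _ = 2 * ((1+v)^2 * Real.exp (1 - v^2)) := by ring
      _ ≤ 2 * (Real.exp (1 + (2+A)^2/4) * (1+v) ^ (-A)) := by
          have := aux1 A v hA hv0; linarith
      _ = 2 * Real.exp (1 + (2+A)^2/4) * (1+v) ^ (-A) := by ring
  calc ‖a‖*‖b‖ + ‖a‖*‖c‖
      ≤ 2 * Real.exp (1 + (2+A)^2/4) * (1+u) ^ (-A)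
        + 2 * Real.exp (1 + (2+A)^2/4) * (1+v) ^ (-A) := add_le_add t1 t2
    _ = 2 * Real.exp (1 + (2+A)^2/4) * ((1+u) ^ (-A) + (1+v) ^ (-A)) := by ring
end

section
/- For every pair of nonnegative integers ν and every A ≥ 0 there is a constant C = C(ν, A) > 0 such that for all real T ≥ 2 and 1 ≤ M ≤ T and all t ∈ ℝ, the ν-th derivative of the restriction of h_{T,M} to ℝ satisfies |h_{T,M}^{(ν)}(t)| ≤ C · M^{−ν} · ((1 + |t−T|/M)^{−A} + (1 + |t+T|/M)^{−A}). -/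
open Complex Metric

lemma hTM_differentiable (T M : ℝ) : Differentiable ℂ (hTM T M) := by
  unfold hTM; fun_prop


lemma iteratedDeriv_real (f : ℂ → ℂ) (hf : Differentiable ℂ f) :
    ∀ (ν : ℕ) (t : ℝ), iteratedDeriv ν (fun s : ℝ => f s) t = iteratedDeriv ν f t := by
  intro ν
  induction ν with
  | zero => intro t; simp
  | succ n ih =>
    intro t
    have hg : Differentiable ℂ (iteratedDeriv n f) :=
      hf.contDiff.differentiable_iteratedDeriv n (by exact_mod_cast WithTop.coe_lt_top _)
    rw [iteratedDeriv_succ, iteratedDeriv_succ]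
    have h1 : iteratedDeriv n (fun s : ℝ => f s) = fun s : ℝ => iteratedDeriv n f s :=
      funext ih
    rw [h1]
    exact ((hg (t : ℂ)).hasDerivAt.comp_ofReal).deriv


lemma gauss_decay (A : ℝ) (hA : 0 ≤ A) (u : ℝ) :
    (1 + u ^ 2) * Real.exp (-u ^ 2) ≤ 2 * Real.exp (A ^ 2 / 2) * (1 + |u|) ^ (-A) := by
  have h1 : (0:ℝ) < 1 + |u| := by positivity
  rw [Real.rpow_neg h1.le, mul_comm (2 * Real.exp (A ^ 2 / 2)), ← div_eq_inv_mul,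
    le_div_iff₀ (by positivity)]
  have hb : (1 + |u|) ^ A ≤ Real.exp (A * |u|) := by
    calc (1 + |u|) ^ A ≤ (Real.exp |u|) ^ A :=
          Real.rpow_le_rpow h1.le (by simpa [add_comm] using Real.add_one_le_exp |u|) hA
      _ = Real.exp (A * |u|) := by
          rw [Real.rpow_def_of_pos (Real.exp_pos _), Real.log_exp, mul_comm]
  have h2 : A * |u| ≤ u ^ 2 / 2 + A ^ 2 / 2 := by
    nlinarith [sq_nonneg (|u| - A), _root_.sq_abs u]
  have h3 : 1 + u ^ 2 ≤ 2 * Real.exp (u ^ 2 / 2) := by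
    nlinarith [Real.add_one_le_exp (u ^ 2 / 2)]
  calc (1 + u ^ 2) * Real.exp (-u ^ 2) * (1 + |u|) ^ A
      ≤ (2 * Real.exp (u ^ 2 / 2)) * Real.exp (-u ^ 2) * Real.exp (u ^ 2 / 2 + A ^ 2 / 2) := by
        have hbb : (0:ℝ) ≤ (1 + |u|) ^ A := Real.rpow_nonneg h1.le A
        have hc := hb.trans (Real.exp_le_exp.mpr h2)
        exact mul_le_mul (mul_le_mul_of_nonneg_right h3 (Real.exp_pos _).le) hc hbb
          (by positivity)
    _ = 2 * Real.exp (A ^ 2 / 2) := by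
        rw [mul_assoc, mul_assoc, ← Real.exp_add, ← Real.exp_add]; ring_nf


lemma hTM_base (A : ℝ) (hA : 0 ≤ A) (T M : ℝ) (hT : 2 ≤ T) (hM : 1 ≤ M) (hMT : M ≤ T)
    (z : ℂ) (hz : |z.im| ≤ M) :
    ‖hTM T M z‖ ≤ 8 * Real.exp (1 + A ^ 2 / 2) *
      ((1 + |z.re - T| / M) ^ (-A) + (1 + |z.re + T| / M) ^ (-A)) := by
  have hM0 : (0:ℝ) < M := lt_of_lt_of_le one_pos hM
  have hT0 : (0:ℝ) < T := lt_of_lt_of_le two_pos hT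
  set u : ℝ := (z.re - T) / M with hu
  set v : ℝ := (z.re + T) / M with hv
  have him : z.im ^ 2 ≤ M ^ 2 := by
    have := sq_le_sq' (neg_le_of_abs_le hz) (le_of_abs_le hz)
    simpa using this
  have huM : u * M = z.re - T := by rw [hu]; exact div_mul_cancel₀ _ hM0.ne'
  have hvM : v * M = z.re + T := by rw [hv]; exact div_mul_cancel₀ _ hM0.ne'
  have hMT2 : M ^ 2 ≤ T ^ 2 := by nlinarith
  -- norm of the prefactor
  have hden : ((T:ℂ) ^ 2 + 1 / 4) = ((T ^ 2 + 1 / 4 : ℝ) : ℂ) := by push_cast; ring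
  have hQ : ‖(z ^ 2 + 1 / 4 : ℂ) / ((T:ℂ) ^ 2 + 1 / 4)‖ ≤
      (z.re ^ 2 + z.im ^ 2 + 1 / 4) / (T ^ 2 + 1 / 4) := by
    rw [norm_div, hden, Complex.norm_real, Real.norm_of_nonneg (by positivity)]
    gcongr
    calc ‖(z ^ 2 + 1 / 4 : ℂ)‖ ≤ ‖z ^ 2‖ + ‖(1 / 4 : ℂ)‖ := norm_add_le _ _
      _ = ‖z‖ ^ 2 + 1 / 4 := by rw [norm_pow]; norm_num
      _ = z.re ^ 2 + z.im ^ 2 + 1 / 4 := by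
          rw [Complex.sq_norm, Complex.normSq_apply]; ring
  have hQ0 : (0:ℝ) ≤ ‖(z ^ 2 + 1 / 4 : ℂ) / ((T:ℂ) ^ 2 + 1 / 4)‖ := norm_nonneg _
  -- norms of the two exponentials
  have hexp : ∀ s : ℝ, ((z - (s:ℂ)) / (M:ℂ)).re = (z.re - s) / M ∧
      ((z - (s:ℂ)) / (M:ℂ)).im = z.im / M := by
    intro s
    constructor
    · rw [div_ofReal_re]; simp
    · rw [div_ofReal_im]; simp
  have hE : ∀ s : ℝ, ‖Complex.exp (-(((z - (s:ℂ)) / (M:ℂ)) ^ 2))‖ =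
      Real.exp ((z.im / M) ^ 2 - ((z.re - s) / M) ^ 2) := by
    intro s
    rw [Complex.norm_exp]
    congr 1
    rw [Complex.neg_re, sq, Complex.mul_re, (hexp s).1, (hexp s).2]
    ring
  have hE1 : ‖Complex.exp (-(((z - (T:ℂ)) / (M:ℂ)) ^ 2))‖ ≤
      Real.exp 1 * Real.exp (-u ^ 2) := by
    rw [hE T, ← Real.exp_add]
    apply Real.exp_le_exp.mpr
    have : (z.im / M) ^ 2 ≤ 1 := by
      rw [div_pow, div_le_one (by positivity)]; exact him
    rw [hu]; nlinarith
  have hE2 : ‖Complex.exp (-(((z + (T:ℂ)) / (M:ℂ)) ^ 2))‖ ≤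
      Real.exp 1 * Real.exp (-v ^ 2) := by
    have : z + (T:ℂ) = z - ((-T : ℝ):ℂ) := by push_cast; ring
    rw [this, hE (-T), ← Real.exp_add, show z.re - -T = z.re + T from by ring, ← hv]
    apply Real.exp_le_exp.mpr
    have h1 : (z.im / M) ^ 2 ≤ 1 := by
      rw [div_pow, div_le_one (by positivity)]; exact him
    linarith
  -- prefactor bounds
  have hQu : ‖(z ^ 2 + 1 / 4 : ℂ) / ((T:ℂ) ^ 2 + 1 / 4)‖ ≤ 4 * (1 + u ^ 2) := by
    refine hQ.trans ?_
    rw [div_le_iff₀ (by positivity), show z.re = u * M + T from by linarith]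
    nlinarith [sq_nonneg (T - u * M), mul_nonneg (sub_nonneg.2 hMT2) (sq_nonneg u),
      sq_nonneg u]
  have hQv : ‖(z ^ 2 + 1 / 4 : ℂ) / ((T:ℂ) ^ 2 + 1 / 4)‖ ≤ 4 * (1 + v ^ 2) := by
    refine hQ.trans ?_
    rw [div_le_iff₀ (by positivity), show z.re = v * M - T from by linarith]
    nlinarith [sq_nonneg (T + v * M), mul_nonneg (sub_nonneg.2 hMT2) (sq_nonneg v),
      sq_nonneg v]
  -- absolute values
  have habsu : |u| = |z.re - T| / M := by rw [hu, abs_div, abs_of_pos hM0]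
  have habsv : |v| = |z.re + T| / M := by rw [hv, abs_div, abs_of_pos hM0]
  -- combine
  have key : ∀ w : ℝ, ‖(z ^ 2 + 1 / 4 : ℂ) / ((T:ℂ) ^ 2 + 1 / 4)‖ ≤ 4 * (1 + w ^ 2) →
      ‖(z ^ 2 + 1 / 4 : ℂ) / ((T:ℂ) ^ 2 + 1 / 4)‖ * (Real.exp 1 * Real.exp (-w ^ 2)) ≤
        8 * Real.exp (1 + A ^ 2 / 2) * (1 + |w|) ^ (-A) := by
    intro w hw
    calc ‖(z ^ 2 + 1 / 4 : ℂ) / ((T:ℂ) ^ 2 + 1 / 4)‖ * (Real.exp 1 * Real.exp (-w ^ 2))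
        ≤ 4 * (1 + w ^ 2) * (Real.exp 1 * Real.exp (-w ^ 2)) := by
          apply mul_le_mul_of_nonneg_right hw (by positivity)
      _ = 4 * Real.exp 1 * ((1 + w ^ 2) * Real.exp (-w ^ 2)) := by ring
      _ ≤ 4 * Real.exp 1 * (2 * Real.exp (A ^ 2 / 2) * (1 + |w|) ^ (-A)) := by
          apply mul_le_mul_of_nonneg_left (gauss_decay A hA w) (by positivity)
      _ = 8 * Real.exp (1 + A ^ 2 / 2) * (1 + |w|) ^ (-A) := by
          rw [Real.exp_add]; ring
  calc ‖hTM T M z‖ ≤ ‖(z ^ 2 + 1 / 4 : ℂ) / ((T:ℂ) ^ 2 + 1 / 4)‖ *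
        (‖Complex.exp (-(((z - (T:ℂ)) / (M:ℂ)) ^ 2))‖ +
         ‖Complex.exp (-(((z + (T:ℂ)) / (M:ℂ)) ^ 2))‖) := by
        rw [hTM, norm_mul]
        exact mul_le_mul_of_nonneg_left (norm_add_le _ _) hQ0
    _ ≤ ‖(z ^ 2 + 1 / 4 : ℂ) / ((T:ℂ) ^ 2 + 1 / 4)‖ * (Real.exp 1 * Real.exp (-u ^ 2)) +
        ‖(z ^ 2 + 1 / 4 : ℂ) / ((T:ℂ) ^ 2 + 1 / 4)‖ * (Real.exp 1 * Real.exp (-v ^ 2)) := by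
        rw [← mul_add]
        exact mul_le_mul_of_nonneg_left (add_le_add hE1 hE2) hQ0
    _ ≤ 8 * Real.exp (1 + A ^ 2 / 2) * (1 + |u|) ^ (-A) +
        8 * Real.exp (1 + A ^ 2 / 2) * (1 + |v|) ^ (-A) :=
        add_le_add (key u hQu) (key v hQv)
    _ = 8 * Real.exp (1 + A ^ 2 / 2) *
        ((1 + |z.re - T| / M) ^ (-A) + (1 + |z.re + T| / M) ^ (-A)) := by
        rw [habsu, habsv]; ring


lemma maj_shift (A : ℝ) (hA : 0 ≤ A) {a b : ℝ} (ha : 0 ≤ a) (hb : 0 ≤ b)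
    (h : 1 + b ≤ 2 * (1 + a)) : (1 + a) ^ (-A) ≤ 2 ^ A * (1 + b) ^ (-A) := by
  have h1 : (0:ℝ) < (1 + b) / 2 := by linarith
  have h2 : (1 + b) / 2 ≤ 1 + a := by linarith
  calc (1 + a) ^ (-A) ≤ ((1 + b) / 2) ^ (-A) :=
        Real.rpow_le_rpow_of_nonpos h1 h2 (by linarith)
    _ = 2 ^ A * (1 + b) ^ (-A) := by
        rw [Real.div_rpow (by linarith) (by norm_num), Real.rpow_neg (by norm_num : (0:ℝ) ≤ 2),
          div_eq_mul_inv, inv_inv, mul_comm]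


lemma strip_bound (ν : ℕ) (A : ℝ) (hA : 0 ≤ A) :
    ∃ C : ℝ, 0 < C ∧ ∀ T M : ℝ, 2 ≤ T → 1 ≤ M → M ≤ T → ∀ z : ℂ,
      |z.im| ≤ M / 2 ^ ν →
      ‖iteratedDeriv ν (hTM T M) z‖ ≤ C * M ^ (-(ν : ℝ)) *
        ((1 + |z.re - T| / M) ^ (-A) + (1 + |z.re + T| / M) ^ (-A)) := by
  induction ν with
  | zero =>
    refine ⟨8 * Real.exp (1 + A ^ 2 / 2), by positivity, fun T M hT hM hMT z hz => ?_⟩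
    simpa using hTM_base A hA T M hT hM hMT z (by simpa using hz)
  | succ n ih =>
    obtain ⟨C, hC, hbound⟩ := ih
    refine ⟨C * 2 ^ A * 2 ^ (n + 1), by positivity, fun T M hT hM hMT z hz => ?_⟩
    have hM0 : (0:ℝ) < M := lt_of_lt_of_le one_pos hM
    set r : ℝ := M / 2 ^ (n + 1) with hr
    have hr0 : 0 < r := by positivity
    set g : ℂ → ℂ := iteratedDeriv n (hTM T M) with hg
    have hgd : Differentiable ℂ g :=
      (hTM_differentiable T M).contDiff.differentiable_iteratedDeriv n
        (by exact_mod_cast WithTop.coe_lt_top _)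
    set maj : ℝ := (1 + |z.re - T| / M) ^ (-A) + (1 + |z.re + T| / M) ^ (-A) with hmaj
    have hsphere : ∀ w ∈ sphere z r, ‖g w‖ ≤ C * M ^ (-(n : ℝ)) * (2 ^ A * maj) := by
      intro w hw
      have hdist : ‖w - z‖ = r := by
        simpa [Complex.dist_eq] using mem_sphere_iff_norm.mp hw
      have him : |w.im - z.im| ≤ r := by
        simpa using (Complex.abs_im_le_norm (w - z)).trans hdist.le
      have hre : |w.re - z.re| ≤ r := by
        simpa using (Complex.abs_re_le_norm (w - z)).trans hdist.le
      have hwim : |w.im| ≤ M / 2 ^ n := by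
        have h6 : |w.im| ≤ |z.im| + |w.im - z.im| := by
          calc |w.im| = |z.im + (w.im - z.im)| := by ring_nf
            _ ≤ |z.im| + |w.im - z.im| := abs_add_le _ _
        have h2 : M / 2 ^ (n + 1) + M / 2 ^ (n + 1) = M / 2 ^ n := by ring
        rw [hr] at him
        linarith
      have h2p : (1:ℝ) ≤ 2 ^ (n + 1) := one_le_pow₀ (by norm_num)
      have hrM : r ≤ M := by rw [hr]; exact div_le_self hM0.le h2p
      have hreM : |w.re - z.re| ≤ M := hre.trans hrM
      have hstep := hbound T M hT hM hMT w hwim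
      refine hstep.trans ?_
      rw [mul_assoc, mul_assoc]
      apply mul_le_mul_of_nonneg_left ?_ hC.le
      apply mul_le_mul_of_nonneg_left ?_ (Real.rpow_nonneg hM0.le _)
      rw [hmaj, mul_add]
      have key : ∀ c : ℝ, (1 + |w.re - c| / M) ^ (-A) ≤ 2 ^ A * (1 + |z.re - c| / M) ^ (-A) := by
        intro c
        apply maj_shift A hA (by positivity) (by positivity)
        have h4 : |z.re - w.re| ≤ M := by rw [abs_sub_comm]; exact hreM
        have h3 : |z.re - c| ≤ |w.re - c| + M := by
          calc |z.re - c| = |(w.re - c) + (z.re - w.re)| := by ring_nf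
            _ ≤ |w.re - c| + |z.re - w.re| := abs_add_le _ _
            _ ≤ |w.re - c| + M := by linarith
        have h5 : |z.re - c| / M ≤ |w.re - c| / M + 1 := by
          calc |z.re - c| / M ≤ (|w.re - c| + M) / M := by gcongr
            _ = |w.re - c| / M + 1 := by field_simp
        have h6 : 0 ≤ |w.re - c| / M := by positivity
        linarith
      have k1 := key T
      have k2 : (1 + |w.re + T| / M) ^ (-A) ≤ 2 ^ A * (1 + |z.re + T| / M) ^ (-A) := by
        have := key (-T); simpa [sub_neg_eq_add] using this
      exact add_le_add k1 k2
    have hcauchy := Complex.norm_deriv_le_of_forall_mem_sphere_norm_le hr0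
      (hgd.diffContOnCl) hsphere
    rw [iteratedDeriv_succ, ← hg]
    refine hcauchy.trans ?_
    have hMpow : M ^ (-((n : ℝ) + 1)) = M ^ (-(n : ℝ)) / M := by
      rw [show -((n : ℝ) + 1) = -(n : ℝ) + (-1) by ring, Real.rpow_add hM0,
        Real.rpow_neg_one, div_eq_mul_inv]
    have hcast : -((n + 1 : ℕ) : ℝ) = -((n : ℝ) + 1) := by push_cast; ring
    have heq : C * M ^ (-(n : ℝ)) * (2 ^ A * maj) / r =
        C * 2 ^ A * 2 ^ (n + 1) * M ^ (-((n + 1 : ℕ) : ℝ)) * maj := by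
      rw [hcast, hMpow, hr]
      have hp : ((2:ℝ) ^ (n + 1)) ≠ 0 := by positivity
      field_simp
    exact heq.le

/-- For every `ν ∈ ℕ` and `A ≥ 0` there is `C = C(ν, A) > 0` such that for all
`T ≥ 2`, `1 ≤ M ≤ T`, and `t ∈ ℝ`, the ν-th derivative of the restriction of
`h_{T,M}` to ℝ satisfies
`|h_{T,M}^{(ν)}(t)| ≤ C · M^{−ν} · ((1 + |t−T|/M)^{−A} + (1 + |t+T|/M)^{−A})`. -/
theorem stmt_2 :
    ∀ (ν : ℕ) (A : ℝ), 0 ≤ A → ∃ C : ℝ, 0 < C ∧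
      ∀ T M t : ℝ, 2 ≤ T → 1 ≤ M → M ≤ T →
        ‖iteratedDeriv ν (fun s : ℝ => hTM T M (s : ℂ)) t‖ ≤
          C * M ^ (-(ν : ℝ)) *
            ((1 + |t - T| / M) ^ (-A) + (1 + |t + T| / M) ^ (-A)) := by
  intro ν A hA
  obtain ⟨C, hC, hbound⟩ := strip_bound ν A hA
  refine ⟨C, hC, fun T M t hT hM hMT => ?_⟩
  rw [iteratedDeriv_real (hTM T M) (hTM_differentiable T M) ν t]
  have hM0 : (0:ℝ) < M := lt_of_lt_of_le one_pos hM
  have h0 : |(t : ℂ).im| ≤ M / 2 ^ ν := by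
    simp only [Complex.ofReal_im, abs_zero]
    positivity
  have := hbound T M hT hM hMT (t : ℂ) h0
  simpa using this
end

section
/- There exist absolute constants c₁, c₂ > 0 such that for all real T ≥ 4 and 1 ≤ M ≤ T/2, one has c₁ · T·M ≤ ∫_ℝ |t · h_{T,M}(t)| dt ≤ c₂ · T·M. -/
open MeasureTheory Real

lemma norm_aux (T M t : ℝ) :
    ‖(t : ℂ) * hTM T M (t : ℂ)‖ =
      |t| * ((t^2+1/4)/(T^2+1/4)) *
        (Real.exp (-(((t-T)/M)^2)) + Real.exp (-(((t+T)/M)^2))) := by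
  have h : (t : ℂ) * hTM T M (t : ℂ) =
      ((t * (((t^2+1/4)/(T^2+1/4)) *
        (Real.exp (-(((t-T)/M)^2)) + Real.exp (-(((t+T)/M)^2)))) : ℝ) : ℂ) := by
    unfold hTM
    push_cast [Complex.ofReal_exp]
    ring
  rw [h, Complex.norm_real, Real.norm_eq_abs, abs_mul, abs_of_nonneg (by positivity :
    (0:ℝ) ≤ ((t^2+1/4)/(T^2+1/4)) * (Real.exp (-(((t-T)/M)^2)) + Real.exp (-(((t+T)/M)^2))))]
  ring

lemma piece (T M t S : ℝ) (hT : 4 ≤ T) (hM : 1 ≤ M) (hMT : M ≤ T/2) (hS : |S| = T) :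
    |t| * ((t^2+1/4)/(T^2+1/4)) * Real.exp (-(((t-S)/M)^2)) ≤
      8 * Real.exp (9/2) * T * Real.exp (-(1/(2*M^2)) * (t-S)^2) := by
  have hM0 : (0:ℝ) < M := by linarith
  have hT0 : (0:ℝ) < T := by linarith
  set x : ℝ := |t - S| / M with hxdef
  have hx0 : 0 ≤ x := by positivity
  have hMx : M * x = |t - S| := by
    rw [hxdef]; field_simp
  have ex1 : ((t-S)/M)^2 = x^2 := by
    rw [hxdef, div_pow, div_pow, sq_abs]
  have ex2 : (1/(2*M^2)) * (t-S)^2 = x^2/2 := by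
    rw [hxdef, div_pow, sq_abs]; ring
  have habs : |t| ≤ T + M * x := by
    rw [hMx, ← hS]
    calc |t| = |S + (t - S)| := by ring_nf
    _ ≤ |S| + |t - S| := abs_add_le _ _
  have hb : |t| + 1 ≤ 2*T*(1+x) := by
    have h2 : M * x ≤ 2*T*x := mul_le_mul_of_nonneg_right (by linarith) hx0
    nlinarith
  have hcube : (|t| + 1)^3 ≤ (2*T*(1+x))^3 :=
    pow_le_pow_left₀ (by positivity) hb 3
  have h3 : |t| * (t^2+1/4) ≤ 8*T^3*(1+x)^3 := by
    nlinarith [sq_abs t, abs_nonneg t, hcube]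
  have h4 : |t| * ((t^2+1/4)/(T^2+1/4)) ≤ 8*T*(1+x)^3 := by
    rw [mul_div_assoc', div_le_iff₀ (by positivity)]
    nlinarith [pow_nonneg (by positivity : (0:ℝ) ≤ 1+x) 3]
  have h5 : (1+x)^3 ≤ Real.exp (3*x) := by
    calc (1+x)^3 ≤ (Real.exp x)^3 :=
          pow_le_pow_left₀ (by positivity) (by linarith [Real.add_one_le_exp x]) 3
    _ = Real.exp (3*x) := by rw [← Real.exp_nat_mul]; norm_num
  have h6 : Real.exp (3*x) * Real.exp (-(x^2)) ≤ Real.exp (9/2) * Real.exp (-(x^2/2)) := by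
    rw [← Real.exp_add, ← Real.exp_add]
    apply Real.exp_le_exp.2
    nlinarith [sq_nonneg (x - 3)]
  rw [ex1, show (-(1/(2*M^2)) * (t-S)^2 : ℝ) = -(x^2/2) by rw [neg_mul, ex2]]
  calc |t| * ((t^2+1/4)/(T^2+1/4)) * Real.exp (-(x^2))
      ≤ (8*T*(1+x)^3) * Real.exp (-(x^2)) := by
        apply mul_le_mul_of_nonneg_right h4 (Real.exp_nonneg _)
    _ ≤ (8*T*Real.exp (3*x)) * Real.exp (-(x^2)) := by
        have := mul_le_mul_of_nonneg_left h5 (by positivity : (0:ℝ) ≤ 8*T)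
        exact mul_le_mul_of_nonneg_right (by linarith) (Real.exp_nonneg _)
    _ = 8*T*(Real.exp (3*x) * Real.exp (-(x^2))) := by ring
    _ ≤ 8*T*(Real.exp (9/2) * Real.exp (-(x^2/2))) := by
        apply mul_le_mul_of_nonneg_left h6 (by positivity)
    _ = 8 * Real.exp (9/2) * T * Real.exp (-(x^2/2)) := by ring

/-- There are absolute constants `c₁, c₂ > 0` such that for all `T ≥ 4` and
`1 ≤ M ≤ T/2`: `c₁ · T·M ≤ ∫_ℝ |t · h_{T,M}(t)| dt ≤ c₂ · T·M`. -/
theorem stmt_3 :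
    ∃ c₁ c₂ : ℝ, 0 < c₁ ∧ 0 < c₂ ∧
      ∀ T M : ℝ, 4 ≤ T → 1 ≤ M → M ≤ T / 2 →
        c₁ * (T * M) ≤ (∫ t : ℝ, ‖(t : ℂ) * hTM T M (t : ℂ)‖) ∧
        (∫ t : ℝ, ‖(t : ℂ) * hTM T M (t : ℂ)‖) ≤ c₂ * (T * M) := by
  refine ⟨Real.exp (-1), 48 * Real.exp (9/2), Real.exp_pos _, by positivity, ?_⟩
  intro T M hT hM hMT
  have hM0 : (0:ℝ) < M := by linarith
  have hT0 : (0:ℝ) < T := by linarith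
  set b : ℝ := 1/(2*M^2) with hbdef
  have hb0 : 0 < b := by positivity
  set g : ℝ → ℝ := fun t => ‖(t : ℂ) * hTM T M (t : ℂ)‖ with hgdef
  set G : ℝ → ℝ := fun t =>
    8 * Real.exp (9/2) * T * (Real.exp (-b*(t-T)^2) + Real.exp (-b*(t+T)^2)) with hGdef
  -- integrability of G
  have hint1 : Integrable (fun t : ℝ => Real.exp (-b*(t-T)^2)) :=
    (integrable_exp_neg_mul_sq hb0).comp_sub_right T
  have hint2 : Integrable (fun t : ℝ => Real.exp (-b*(t+T)^2)) := by
    simpa [sub_neg_eq_add] using (integrable_exp_neg_mul_sq hb0).comp_sub_right (-T)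
  have hGint : Integrable G := ((hint1.add hint2).const_mul _)
  -- pointwise bound g ≤ G
  have hbound : ∀ t : ℝ, g t ≤ G t := by
    intro t
    have hp1 := piece T M t T hT hM hMT (abs_of_pos hT0)
    have hp2 := piece T M t (-T) hT hM hMT (by rw [abs_neg, abs_of_pos hT0])
    rw [hgdef]
    simp only [norm_aux]
    have e1 : (-(1/(2*M^2)) * (t-T)^2 : ℝ) = -b*(t-T)^2 := by rw [hbdef]
    have e2 : (-(1/(2*M^2)) * (t-(-T))^2 : ℝ) = -b*(t+T)^2 := by rw [hbdef]; ring_nf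
    rw [e1] at hp1
    rw [e2] at hp2
    have e3 : (t - (-T)) = t + T := by ring
    rw [e3] at hp2
    have expand : |t| * ((t^2+1/4)/(T^2+1/4)) *
        (Real.exp (-(((t-T)/M)^2)) + Real.exp (-(((t+T)/M)^2)))
        = |t| * ((t^2+1/4)/(T^2+1/4)) * Real.exp (-(((t-T)/M)^2))
          + |t| * ((t^2+1/4)/(T^2+1/4)) * Real.exp (-(((t+T)/M)^2)) := by ring
    rw [expand]
    refine le_trans (add_le_add hp1 hp2) (le_of_eq ?_)
    show _ = 8 * Real.exp (9/2) * T * (Real.exp (-b*(t-T)^2) + Real.exp (-b*(t+T)^2))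
    ring
  -- measurability and integrability of g
  have hgcont : Continuous g := by
    have : g = fun t : ℝ => |t| * ((t^2+1/4)/(T^2+1/4)) *
        (Real.exp (-(((t-T)/M)^2)) + Real.exp (-(((t+T)/M)^2))) :=
      funext fun t => norm_aux T M t
    rw [this]; fun_prop
  have hgint : Integrable g := by
    refine hGint.mono' hgcont.aestronglyMeasurable (Filter.Eventually.of_forall fun t => ?_)
    rw [Real.norm_eq_abs, abs_of_nonneg (norm_nonneg _)]
    exact hbound t
  constructor
  · -- lower bound
    have hIcc : (volume (Set.Icc T (T+M))).toReal = M := by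
      rw [Real.volume_Icc, add_sub_cancel_left, ENNReal.toReal_ofReal (by linarith)]
    have hconst : ∀ t ∈ Set.Icc T (T+M), Real.exp (-1) * T ≤ g t := by
      intro t ht
      obtain ⟨ht1, ht2⟩ := ht
      rw [hgdef]
      simp only [norm_aux]
      have r2 : T ≤ |t| := by rw [abs_of_nonneg (by linarith)]; linarith
      have r1 : 1 ≤ (t^2+1/4)/(T^2+1/4) := (one_le_div (by positivity)).2 (by nlinarith)
      have e1 : Real.exp (-1) ≤ Real.exp (-(((t-T)/M)^2)) := by
        apply Real.exp_le_exp.2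
        have h1 : (t-T)/M ≤ 1 := (div_le_one hM0).2 (by linarith)
        have h2 : 0 ≤ (t-T)/M := div_nonneg (by linarith) hM0.le
        nlinarith
      have e2 : Real.exp (-1) ≤ Real.exp (-(((t-T)/M)^2)) + Real.exp (-(((t+T)/M)^2)) :=
        le_trans e1 (le_add_of_nonneg_right (Real.exp_nonneg _))
      calc Real.exp (-1) * T = T * (1 * Real.exp (-1)) := by ring
      _ ≤ |t| * (((t^2+1/4)/(T^2+1/4)) *
            (Real.exp (-(((t-T)/M)^2)) + Real.exp (-(((t+T)/M)^2)))) := by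
          apply mul_le_mul r2 _ (by positivity) (abs_nonneg t)
          apply mul_le_mul r1 e2 (Real.exp_nonneg _) (by positivity)
      _ = |t| * ((t^2+1/4)/(T^2+1/4)) *
            (Real.exp (-(((t-T)/M)^2)) + Real.exp (-(((t+T)/M)^2))) := by ring
    have hset : Real.exp (-1) * T * (volume (Set.Icc T (T+M))).toReal
        ≤ ∫ t in Set.Icc T (T+M), g t :=
      setIntegral_ge_of_const_le_real measurableSet_Icc (by rw [Real.volume_Icc]; exact ENNReal.ofReal_ne_top) hconst hgint.integrableOn
    have hle : (∫ t in Set.Icc T (T+M), g t) ≤ ∫ t, g t :=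
      setIntegral_le_integral hgint (Filter.Eventually.of_forall fun t => norm_nonneg _)
    rw [hIcc] at hset
    calc Real.exp (-1) * (T * M) = Real.exp (-1) * T * M := by ring
    _ ≤ ∫ t in Set.Icc T (T+M), g t := hset
    _ ≤ ∫ t, g t := hle
  · -- upper bound
    have hmono : (∫ t, g t) ≤ ∫ t, G t := integral_mono hgint hGint hbound
    have hI1 : (∫ t : ℝ, Real.exp (-b * (t - T)^2)) = Real.sqrt (π / b) := by
      rw [show (fun t : ℝ => Real.exp (-b * (t - T)^2))
          = fun t => (fun x => Real.exp (-b * x^2)) (t - T) from rfl]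
      rw [integral_sub_right_eq_self (fun x => Real.exp (-b * x^2)) T, integral_gaussian]
    have hI2 : (∫ t : ℝ, Real.exp (-b * (t + T)^2)) = Real.sqrt (π / b) := by
      rw [show (fun t : ℝ => Real.exp (-b * (t + T)^2))
          = fun t => (fun x => Real.exp (-b * x^2)) (t + T) from rfl]
      rw [integral_add_right_eq_self (fun x => Real.exp (-b * x^2)) T, integral_gaussian]
    have hsqrt : Real.sqrt (π / b) ≤ 3 * M := by
      have h1 : π / b ≤ (3*M)^2 := by
        rw [hbdef, div_div_eq_mul_div, div_one]
        nlinarith [Real.pi_le_four]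
      calc Real.sqrt (π / b) ≤ Real.sqrt ((3*M)^2) := Real.sqrt_le_sqrt h1
      _ = 3*M := Real.sqrt_sq (by linarith)
    have hGval : (∫ t, G t) = 8 * Real.exp (9/2) * T * (2 * Real.sqrt (π / b)) := by
      show (∫ t : ℝ, 8 * Real.exp (9/2) * T * (Real.exp (-b*(t-T)^2) + Real.exp (-b*(t+T)^2))) = _
      rw [integral_const_mul, integral_add hint1 hint2, hI1, hI2]
      ring
    calc (∫ t, g t) ≤ ∫ t, G t := hmono
    _ = 8 * Real.exp (9/2) * T * (2 * Real.sqrt (π / b)) := hGval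
    _ ≤ 8 * Real.exp (9/2) * T * (2 * (3*M)) := by
        apply mul_le_mul_of_nonneg_left (by linarith) (by positivity)
    _ = 48 * Real.exp (9/2) * (T * M) := by ring
end

section
/- There exist absolute constants c₁, c₂ > 0 such that for all real T ≥ 4 and 1 ≤ M ≤ T/2, the diagonal Kuznetsov transform satisfies c₁ · T·M ≤ ℋ₀[h_{T,M}] ≤ c₂ · T·M, where ℋ₀[H] := (1/π) ∫_ℝ t · tanh(πt) · H(t) dt. -/
open MeasureTheory

/-- The diagonal Kuznetsov transform `ℋ₀[H] := (1/π) ∫_ℝ t·tanh(πt)·H(t) dt`,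
applied to (the restriction to ℝ of) a test function `H : ℂ → ℂ`. -/
noncomputable def H0 (H : ℂ → ℂ) : ℂ :=
  (1 / (Real.pi : ℂ)) * ∫ t : ℝ, (t : ℂ) * (Real.tanh (Real.pi * t) : ℂ) * H (t : ℂ)

/- ## Auxiliary material -/

lemma my_integrable_polyGauss : Integrable (fun u : ℝ => (1 + |u|)^3 * Real.exp (-u^2)) := by
  have h4 : Integrable (fun u : ℝ => u ^ 4 * Real.exp (-1 * u^2)) := by
    have := integrable_rpow_mul_exp_neg_mul_sq (b := 1) one_pos (s := 4) (by norm_num)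
    have e : ∀ u : ℝ, u ^ (4:ℝ) = u ^ (4:ℕ) := fun u => by
      rw [show ((4:ℝ)) = ((4:ℕ):ℝ) by norm_num, Real.rpow_natCast]
    simpa [e] using this
  have hmaj : Integrable (fun u : ℝ => 8 * Real.exp (-1 * u^2) + 8 * (u ^ 4 * Real.exp (-1 * u^2))) :=
    ((integrable_exp_neg_mul_sq one_pos).const_mul 8).add (h4.const_mul 8)
  refine hmaj.mono' ?_ ?_
  · exact (((continuous_const.add continuous_abs).pow 3).mul
      ((continuous_neg.comp (continuous_pow 2)).rexp)).aestronglyMeasurable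
  · filter_upwards with u
    have ha : (0:ℝ) ≤ |u| := abs_nonneg u
    have he : (0:ℝ) < Real.exp (-u^2) := Real.exp_pos _
    have hb : (1 + |u|)^3 ≤ 8 + 8 * u^4 := by
      nlinarith [sq_abs u, sq_nonneg (|u| - 1), sq_nonneg (|u|^2 - 1), sq_nonneg |u|]
    have h1 : ‖(1 + |u|)^3 * Real.exp (-u^2)‖ = (1 + |u|)^3 * Real.exp (-u^2) := by
      rw [Real.norm_of_nonneg]; positivity
    rw [h1]
    have h2 : (-1 : ℝ) * u ^ 2 = -u^2 := by ring
    rw [show (8:ℝ) * Real.exp (-1 * u^2) + 8 * (u ^ 4 * Real.exp (-1 * u^2))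
        = (8 + 8*u^4) * Real.exp (-u^2) by rw [h2]; ring]
    exact mul_le_mul_of_nonneg_right hb he.le

lemma my_tanh_abs_le_one (x : ℝ) : |Real.tanh x| ≤ 1 := by
  rw [Real.tanh_eq_sinh_div_cosh, abs_div, abs_of_pos (Real.cosh_pos x),
    div_le_one (Real.cosh_pos x)]
  nlinarith [Real.cosh_sq x, abs_nonneg (Real.sinh x), sq_abs (Real.sinh x), Real.cosh_pos x]

lemma my_continuous_tanh : Continuous Real.tanh := by
  have h : Real.tanh = fun x => Real.sinh x / Real.cosh x :=
    funext fun x => Real.tanh_eq_sinh_div_cosh x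
  rw [h]
  exact Real.continuous_sinh.div Real.continuous_cosh (fun x => (Real.cosh_pos x).ne')

lemma my_half_le_tanh {x : ℝ} (hx : 1 ≤ x) : 1/2 ≤ Real.tanh x := by
  rw [Real.tanh_eq_sinh_div_cosh, le_div_iff₀ (Real.cosh_pos x), Real.sinh_eq, Real.cosh_eq]
  have h1 : 2 ≤ Real.exp x := by
    have := Real.add_one_le_exp x; linarith
  have h2 : Real.exp x * Real.exp (-x) = 1 := by
    rw [← Real.exp_add]; simp
  nlinarith [Real.exp_pos (-x)]

lemma my_mul_tanh_nonneg (t : ℝ) : 0 ≤ t * Real.tanh (Real.pi * t) := by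
  rcases le_or_gt 0 t with h | h
  · refine mul_nonneg h ?_
    rw [Real.tanh_eq_sinh_div_cosh]
    exact div_nonneg (Real.sinh_nonneg_iff.mpr (by positivity)) (Real.cosh_pos _).le
  · have htanh : Real.tanh (Real.pi * t) ≤ 0 := by
      rw [Real.tanh_eq_sinh_div_cosh]
      apply div_nonpos_of_nonpos_of_nonneg _ (Real.cosh_pos _).le
      exact Real.sinh_nonpos_iff.mpr (by nlinarith [Real.pi_pos])
    exact mul_nonneg_of_nonpos_of_nonpos h.le htanh

/-- absolute constant: third Gaussian-type moment -/
noncomputable def myGC : ℝ := ∫ u : ℝ, (1 + |u|)^3 * Real.exp (-u^2)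

lemma myGC_nonneg : 0 ≤ myGC :=
  integral_nonneg fun u => by positivity

/-- the real integrand -/
noncomputable def myPhi (T M : ℝ) (t : ℝ) : ℝ :=
  t * Real.tanh (Real.pi * t) *
    (((t^2 + 1/4)/(T^2 + 1/4)) * (Real.exp (-(((t - T)/M)^2)) + Real.exp (-(((t + T)/M)^2))))

/-- the majorant (half of it) -/
noncomputable def myPsi (T M : ℝ) (t : ℝ) : ℝ :=
  |t| * (((t^2 + 1/4)/(T^2 + 1/4)) * Real.exp (-(((t - T)/M)^2)))

section TM
variable {T M : ℝ} (hT : 4 ≤ T) (hM1 : 1 ≤ M) (hMT : M ≤ T / 2)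
include hT hM1 hMT

lemma myT0 : (0:ℝ) < T := by linarith
lemma myM0 : (0:ℝ) < M := by linarith

lemma myPsi_nonneg (t : ℝ) : 0 ≤ myPsi T M t := by
  unfold myPsi; positivity

lemma myPsi_comp_bound (u : ℝ) :
    myPsi T M (M * u + T) ≤ T * ((1 + |u|)^3 * Real.exp (-u^2)) := by
  have hM0 : (0:ℝ) < M := myM0 hT hM1 hMT
  have hT0 : (0:ℝ) < T := myT0 hT hM1 hMT
  have hkey : myPsi T M (M * u + T)
      = |M*u+T| * ((((M*u+T)^2 + 1/4)/(T^2 + 1/4)) * Real.exp (-u^2)) := by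
    unfold myPsi
    rw [show (M*u + T - T)/M = u by field_simp; ring]
  rw [hkey]
  have ha : (0:ℝ) ≤ |u| := abs_nonneg u
  have h1 : |M*u+T| ≤ T*(1+|u|) := by
    calc |M*u+T| ≤ |M*u| + |T| := abs_add_le _ _
    _ = M*|u| + T := by rw [abs_mul, abs_of_pos hM0, abs_of_pos hT0]
    _ ≤ T*|u| + T := by nlinarith
    _ = T*(1+|u|) := by ring
  have h2 : ((M*u+T)^2 + 1/4)/(T^2 + 1/4) ≤ (1+|u|)^2 := by
    rw [div_le_iff₀ (by positivity)]
    have hsq : (M*u+T)^2 ≤ (T*(1+|u|))^2 := by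
      rw [← sq_abs (M*u+T)]
      exact pow_le_pow_left₀ (abs_nonneg _) h1 2
    nlinarith [sq_nonneg (1+|u|)]
  calc |M*u+T| * ((((M*u+T)^2 + 1/4)/(T^2 + 1/4)) * Real.exp (-u^2))
      ≤ (T*(1+|u|)) * ((1+|u|)^2 * Real.exp (-u^2)) := by
        apply mul_le_mul h1 (mul_le_mul_of_nonneg_right h2 (Real.exp_pos _).le)
          (by positivity) (by positivity)
    _ = T * ((1+|u|)^3 * Real.exp (-u^2)) := by ring

lemma myPsi_continuous : Continuous (myPsi T M) := by
  unfold myPsi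
  have hM0 : (0:ℝ) < M := myM0 hT hM1 hMT
  apply continuous_abs.mul
  apply Continuous.mul
  · exact ((continuous_pow 2).add continuous_const).div_const _
  · exact Continuous.rexp (by continuity)

lemma myPsi_comp_integrable : Integrable (fun u : ℝ => myPsi T M (M * u + T)) := by
  refine (my_integrable_polyGauss.const_mul T).mono' ?_ ?_
  · exact ((myPsi_continuous hT hM1 hMT).comp
      ((continuous_const.mul continuous_id).add continuous_const)).aestronglyMeasurable
  · filter_upwards with u
    rw [Real.norm_of_nonneg (myPsi_nonneg hT hM1 hMT _)]
    exact myPsi_comp_bound hT hM1 hMT u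

lemma myPsi_integrable : Integrable (myPsi T M) := by
  have hM0 : (0:ℝ) < M := myM0 hT hM1 hMT
  have h1 : Integrable (fun y : ℝ => myPsi T M (y + T)) := by
    have := (integrable_comp_mul_left_iff (fun y : ℝ => myPsi T M (y + T)) hM0.ne').mp
    exact this (myPsi_comp_integrable hT hM1 hMT)
  have h2 := h1.comp_sub_right T
  simpa using h2

lemma myPsi_integral_le : (∫ t : ℝ, myPsi T M t) ≤ M * (T * myGC) := by
  have hM0 : (0:ℝ) < M := myM0 hT hM1 hMT
  have hsub : (∫ u : ℝ, myPsi T M (M * u + T)) = |M⁻¹| • ∫ y : ℝ, myPsi T M (y + T) :=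
    Measure.integral_comp_mul_left (fun y : ℝ => myPsi T M (y + T)) M
  have htrans : (∫ y : ℝ, myPsi T M (y + T)) = ∫ t : ℝ, myPsi T M t :=
    integral_add_right_eq_self (myPsi T M) T
  have hJ : (∫ u : ℝ, myPsi T M (M * u + T)) ≤ T * myGC := by
    have := integral_mono_of_nonneg
      (Filter.Eventually.of_forall fun u => myPsi_nonneg hT hM1 hMT (M * u + T))
      (my_integrable_polyGauss.const_mul T)
      (Filter.Eventually.of_forall (myPsi_comp_bound hT hM1 hMT))
    rwa [integral_const_mul] at this
  rw [htrans] at hsub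
  rw [abs_of_pos (inv_pos.mpr hM0), smul_eq_mul] at hsub
  have : (∫ t : ℝ, myPsi T M t) = M * ∫ u : ℝ, myPsi T M (M * u + T) := by
    rw [hsub]; field_simp
  rw [this]
  exact mul_le_mul_of_nonneg_left hJ hM0.le

lemma myPsi_neg_eq (t : ℝ) :
    myPsi T M (-t) = |t| * (((t^2 + 1/4)/(T^2 + 1/4)) * Real.exp (-(((t + T)/M)^2))) := by
  unfold myPsi
  rw [abs_neg, show ((-t - T)/M)^2 = ((t+T)/M)^2 by ring, show (-t:ℝ)^2 = t^2 by ring]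

lemma myPhi_nonneg (t : ℝ) : 0 ≤ myPhi T M t := by
  unfold myPhi
  have h1 := my_mul_tanh_nonneg t
  have h2 : (0:ℝ) ≤ ((t^2 + 1/4)/(T^2 + 1/4)) *
      (Real.exp (-(((t - T)/M)^2)) + Real.exp (-(((t + T)/M)^2))) := by positivity
  exact mul_nonneg h1 h2

lemma myPhi_le (t : ℝ) : myPhi T M t ≤ myPsi T M t + myPsi T M (-t) := by
  rw [myPsi_neg_eq hT hM1 hMT]
  unfold myPhi myPsi
  have h1 := my_tanh_abs_le_one (Real.pi * t)
  have h2 : t * Real.tanh (Real.pi * t) ≤ |t| := by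
    calc t * Real.tanh (Real.pi * t) ≤ |t * Real.tanh (Real.pi * t)| := le_abs_self _
    _ = |t| * |Real.tanh (Real.pi * t)| := abs_mul _ _
    _ ≤ |t| * 1 := mul_le_mul_of_nonneg_left h1 (abs_nonneg t)
    _ = |t| := mul_one _
  have h3 : (0:ℝ) ≤ ((t^2 + 1/4)/(T^2 + 1/4)) *
      (Real.exp (-(((t - T)/M)^2)) + Real.exp (-(((t + T)/M)^2))) := by positivity
  calc t * Real.tanh (Real.pi * t) *
        (((t^2 + 1/4)/(T^2 + 1/4)) * (Real.exp (-(((t - T)/M)^2)) + Real.exp (-(((t + T)/M)^2))))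
      ≤ |t| * (((t^2 + 1/4)/(T^2 + 1/4)) * (Real.exp (-(((t - T)/M)^2)) + Real.exp (-(((t + T)/M)^2)))) :=
        mul_le_mul_of_nonneg_right h2 (by positivity)
    _ = |t| * (((t^2 + 1/4)/(T^2 + 1/4)) * Real.exp (-(((t - T)/M)^2)))
        + |t| * (((t^2 + 1/4)/(T^2 + 1/4)) * Real.exp (-(((t + T)/M)^2))) := by ring

lemma myPhi_abs_le (t : ℝ) : ‖myPhi T M t‖ ≤ myPsi T M t + myPsi T M (-t) := by
  rw [Real.norm_eq_abs, abs_of_nonneg (myPhi_nonneg hT hM1 hMT t)]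
  exact myPhi_le hT hM1 hMT t

lemma myPhi_continuous : Continuous (myPhi T M) := by
  unfold myPhi
  apply Continuous.mul
  · exact continuous_id.mul (my_continuous_tanh.comp (continuous_const.mul continuous_id))
  · apply Continuous.mul
    · exact ((continuous_pow 2).add continuous_const).div_const _
    · exact (Continuous.rexp (by continuity)).add (Continuous.rexp (by continuity))

lemma myPsi2_integrable : Integrable (fun t : ℝ => myPsi T M (-t)) :=
  (myPsi_integrable hT hM1 hMT).comp_neg

lemma myPhi_integrable : Integrable (myPhi T M) := by
  refine ((myPsi_integrable hT hM1 hMT).add (myPsi2_integrable hT hM1 hMT)).mono'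
    (myPhi_continuous hT hM1 hMT).aestronglyMeasurable ?_
  filter_upwards with t
  exact myPhi_abs_le hT hM1 hMT t

lemma myPhi_integral_upper : (∫ t : ℝ, myPhi T M t) ≤ 2 * (M * (T * myGC)) := by
  have h1 : (∫ t : ℝ, myPhi T M t) ≤ ∫ t : ℝ, (myPsi T M t + myPsi T M (-t)) :=
    integral_mono_of_nonneg (Filter.Eventually.of_forall (myPhi_nonneg hT hM1 hMT))
      ((myPsi_integrable hT hM1 hMT).add (myPsi2_integrable hT hM1 hMT))
      (Filter.Eventually.of_forall (myPhi_le hT hM1 hMT))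
  have h2 : (∫ t : ℝ, (myPsi T M t + myPsi T M (-t)))
      = (∫ t : ℝ, myPsi T M t) + ∫ t : ℝ, myPsi T M (-t) :=
    integral_add (myPsi_integrable hT hM1 hMT) (myPsi2_integrable hT hM1 hMT)
  have h3 : (∫ t : ℝ, myPsi T M (-t)) = ∫ t : ℝ, myPsi T M t :=
    integral_neg_eq_self (myPsi T M) volume
  have h4 := myPsi_integral_le hT hM1 hMT
  calc (∫ t : ℝ, myPhi T M t) ≤ _ := h1
    _ = 2 * ∫ t : ℝ, myPsi T M t := by rw [h2, h3]; ring
    _ ≤ 2 * (M * (T * myGC)) := by linarith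

lemma myPhi_lower_ptwise {t : ℝ} (ht : t ∈ Set.Icc T (T + M)) : T / 6 ≤ myPhi T M t := by
  obtain ⟨ht1, ht2⟩ := ht
  have hT0 : (0:ℝ) < T := myT0 hT hM1 hMT
  have hM0 : (0:ℝ) < M := myM0 hT hM1 hMT
  have h0t : (0:ℝ) < t := by linarith
  have htanh : 1/2 ≤ Real.tanh (Real.pi * t) :=
    my_half_le_tanh (by nlinarith [Real.pi_gt_three])
  have hp : 1 ≤ (t^2 + 1/4)/(T^2 + 1/4) := by
    rw [le_div_iff₀ (by positivity)]
    nlinarith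
  have hE1 : Real.exp (-1) ≤ Real.exp (-(((t - T)/M)^2)) := by
    apply Real.exp_le_exp.mpr
    have : ((t - T)/M)^2 ≤ 1 := by
      rw [div_pow, div_le_one (by positivity)]
      nlinarith
    linarith
  have hexp1 : (1:ℝ)/3 ≤ Real.exp (-1) := by
    have h3 : Real.exp 1 ≤ 3 := by linarith [Real.exp_one_lt_d9]
    rw [Real.exp_neg, show (1:ℝ)/3 = 3⁻¹ by norm_num]
    exact inv_anti₀ (Real.exp_pos 1) h3
  have hE2 : (0:ℝ) ≤ Real.exp (-(((t + T)/M)^2)) := (Real.exp_pos _).le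
  unfold myPhi
  have hA : T * (1/2) ≤ t * Real.tanh (Real.pi * t) :=
    mul_le_mul ht1 htanh (by norm_num) h0t.le
  have hB : 1 * (1/3) ≤ ((t^2 + 1/4)/(T^2 + 1/4)) *
      (Real.exp (-(((t - T)/M)^2)) + Real.exp (-(((t + T)/M)^2))) := by
    apply mul_le_mul hp (by linarith) (by norm_num) (by positivity)
  have := mul_le_mul hA hB (by norm_num) (my_mul_tanh_nonneg t)
  nlinarith

lemma myPhi_integral_lower : T / 6 * M ≤ ∫ t : ℝ, myPhi T M t := by
  have hM0 : (0:ℝ) < M := myM0 hT hM1 hMT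
  have hvol : (volume (Set.Icc T (T + M))).toReal = M := by
    rw [Real.volume_Icc]
    simp [ENNReal.toReal_ofReal hM0.le]
  have h1 : T / 6 * (volume (Set.Icc T (T + M))).toReal ≤ ∫ t in Set.Icc T (T + M), myPhi T M t := by
    apply setIntegral_ge_of_const_le_real measurableSet_Icc
    · rw [Real.volume_Icc]; exact ENNReal.ofReal_ne_top
    · exact fun x hx => myPhi_lower_ptwise hT hM1 hMT hx
    · exact (myPhi_integrable hT hM1 hMT).integrableOn
  rw [hvol] at h1
  refine h1.trans (setIntegral_le_integral (myPhi_integrable hT hM1 hMT)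
    (Filter.Eventually.of_forall (myPhi_nonneg hT hM1 hMT)))

lemma myH0_eq : H0 (hTM T M) = (((∫ t : ℝ, myPhi T M t) / Real.pi : ℝ) : ℂ) := by
  have hcast : ∀ t : ℝ, (t : ℂ) * (Real.tanh (Real.pi * t) : ℂ) * hTM T M (t : ℂ)
      = ((myPhi T M t : ℝ) : ℂ) := by
    intro t
    have e1 : Complex.exp (-((((t:ℝ):ℂ) - (T:ℂ)) / (M:ℂ)) ^ 2)
        = ((Real.exp (-(((t - T)/M)^2)) : ℝ) : ℂ) := by
      rw [Complex.ofReal_exp]; congr 1; push_cast; ring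
    have e2 : Complex.exp (-((((t:ℝ):ℂ) + (T:ℂ)) / (M:ℂ)) ^ 2)
        = ((Real.exp (-(((t + T)/M)^2)) : ℝ) : ℂ) := by
      rw [Complex.ofReal_exp]; congr 1; push_cast; ring
    unfold hTM myPhi
    rw [e1, e2]
    push_cast
    ring
  unfold H0
  rw [show (∫ t : ℝ, (t : ℂ) * (Real.tanh (Real.pi * t) : ℂ) * hTM T M (t : ℂ))
      = (((∫ t : ℝ, myPhi T M t : ℝ)) : ℂ) by
    simp_rw [hcast]; exact integral_ofReal]
  have hπ : ((Real.pi : ℝ) : ℂ) ≠ 0 := by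
    exact_mod_cast Real.pi_ne_zero
  push_cast
  field_simp

end TM

/-- There are absolute constants `c₁, c₂ > 0` such that for all `T ≥ 4` and
`1 ≤ M ≤ T/2`: `c₁ · T·M ≤ ℋ₀[h_{T,M}] ≤ c₂ · T·M` (the transform is real, so
the inequalities are stated for its real part, and its imaginary part vanishes). -/
theorem stmt_4 :
    ∃ c₁ c₂ : ℝ, 0 < c₁ ∧ 0 < c₂ ∧
      ∀ T M : ℝ, 4 ≤ T → 1 ≤ M → M ≤ T / 2 →
        (H0 (hTM T M)).im = 0 ∧
        c₁ * (T * M) ≤ (H0 (hTM T M)).re ∧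
        (H0 (hTM T M)).re ≤ c₂ * (T * M) := by
  refine ⟨1/24, (2/3) * myGC + 1, by norm_num, by nlinarith [myGC_nonneg], ?_⟩
  intro T M hT hM1 hMT
  have hT0 : (0:ℝ) < T := by linarith
  have hM0 : (0:ℝ) < M := by linarith
  have hkey := myH0_eq (T := T) (M := M) hT hM1 hMT
  set I := ∫ t : ℝ, myPhi T M t with hI
  have hlow := myPhi_integral_lower hT hM1 hMT
  have hup := myPhi_integral_upper hT hM1 hMT
  have hI0 : 0 ≤ I := le_trans (by positivity) hlow
  refine ⟨by rw [hkey]; exact Complex.ofReal_im _, ?_, ?_⟩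
  · rw [hkey, Complex.ofReal_re]
    have hπinv : (1/4:ℝ) ≤ Real.pi⁻¹ := by
      rw [show (1/4:ℝ) = 4⁻¹ by norm_num]
      exact inv_anti₀ Real.pi_pos Real.pi_le_four
    calc (1:ℝ)/24 * (T * M) = (T / 6 * M) * (1/4) := by ring
      _ ≤ I * Real.pi⁻¹ := mul_le_mul hlow hπinv (by norm_num) hI0
      _ = I / Real.pi := (div_eq_mul_inv I Real.pi).symm
  · rw [hkey, Complex.ofReal_re]
    have hπinv : Real.pi⁻¹ ≤ 1/3 := by
      rw [show (1/3:ℝ) = 3⁻¹ by norm_num]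
      exact inv_anti₀ (by norm_num) Real.pi_gt_three.le
    calc I / Real.pi = I * Real.pi⁻¹ := div_eq_mul_inv I Real.pi
      _ ≤ (2 * (M * (T * myGC))) * (1/3) :=
        mul_le_mul hup hπinv (by positivity) (by nlinarith [myGC_nonneg])
      _ ≤ ((2/3) * myGC + 1) * (T * M) := by nlinarith [myGC_nonneg]
end
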